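/- In the instance D(G,≻,ε): for every core-stable data exchange x there exists a symmetric core-stable data exchange x′ such that u_a(x′) ≥ u_a(x) for every agent a. -/
import Mathlib


open scoped BigOperators
open Classical

namespace DataExchangeHGM

noncomputable section

/-- A data exchange on an arbitrary agent type: entries in `[0,1]`, zero diagonal. -/
def IsExch {A : Type*} (x : A → A → ℝ) : Prop :=
  (∀ a b, 0 ≤ x a b ∧ x a b ≤ 1) ∧ ∀ a, x a a = 0

/-- An exchange over the coalition `U`: zero outside `U × U`. -/
def IsExchOver {A : Type*} (U : Set A) (x : A → A → ℝ) : Prop :=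
  IsExch x ∧ ∀ a b, (a ∉ U ∨ b ∉ U) → x a b = 0

/-- Core stability with respect to a utility function `u` (taking the whole exchange). -/
def CoreStable {A : Type*} (u : (A → A → ℝ) → A → ℝ) (x : A → A → ℝ) : Prop :=
  ¬ ∃ (U : Set A) (y : A → A → ℝ), U.Nonempty ∧ IsExchOver U y ∧ ∀ a ∈ U, u x a < u y a

variable {V E : Type*}

/-- The agents of the instance `D(G,≻,ε)`: one edge agent and one intermediate agent per
hyperedge, and one vertex agent per vertex. -/
abbrev Agent (V E : Type*) := E ⊕ (E ⊕ V)

/-- The edge agent of hyperedge `e`. -/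
def edgeA (e : E) : Agent V E := Sum.inl e

/-- The intermediate agent `i_e` of hyperedge `e`. -/
def interA (e : E) : Agent V E := Sum.inr (Sum.inl e)

/-- The vertex agent of vertex `v`. -/
def vertA (v : V) : Agent V E := Sum.inr (Sum.inr v)

variable [Fintype E]

/-- `E(v)`: the hyperedges containing `v`, where `ends e : Fin 3 → V` lists the three
vertices of `e`. -/
def Ev (ends : E → Fin 3 → V) (v : V) : Finset E :=
  Finset.univ.filter (fun e => ∃ t, ends e t = v)

/-- The weight `w_v(e)`: `d+H+1`, `d+H`, or `H` according to the rank (0 = most preferred,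
1 = second, 2 = least) of `e` in `v`'s preference order. -/
def weight (d H : ℝ) (rank : V → E → Fin 3) (v : V) (e : E) : ℝ :=
  if rank v e = 0 then d + H + 1 else if rank v e = 1 then d + H else H

/-- Utility of the edge agent `e`: payoff `x_{i_e,e}` minus cost `(1-ε)·x_{e,i_e}`. -/
def uEdge (ε : ℝ) (x : Agent V E → Agent V E → ℝ) (e : E) : ℝ :=
  x (interA e) (edgeA e) - (1 - ε) * x (edgeA e) (interA e)

/-- Utility of the intermediate agent `i_e`. -/
def uInter (ε : ℝ) (ends : E → Fin 3 → V) (x : Agent V E → Agent V E → ℝ) (e : E) : ℝ :=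
  min (x (edgeA e) (interA e))
      (min (x (vertA (ends e 0)) (interA e))
        (min (x (vertA (ends e 1)) (interA e)) (x (vertA (ends e 2)) (interA e))))
    - (1 - ε) *
      max (x (interA e) (edgeA e))
        (max (x (interA e) (vertA (ends e 0)))
          (max (x (interA e) (vertA (ends e 1))) (x (interA e) (vertA (ends e 2)))))

/-- Utility of the vertex agent `v`. -/
def uVert (d H Γ : ℝ) (ends : E → Fin 3 → V) (rank : V → E → Fin 3)
    (x : Agent V E → Agent V E → ℝ) (v : V) : ℝ :=
  (∑ e ∈ Ev ends v, weight d H rank v e * x (interA e) (vertA v))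
    - Γ * max ((∑ e ∈ Ev ends v, x (vertA v) (interA e)) - 1) 0

/-- The utility function of the instance `D(G,≻,ε)`. -/
def util (ε d H Γ : ℝ) (ends : E → Fin 3 → V) (rank : V → E → Fin 3)
    (x : Agent V E → Agent V E → ℝ) : Agent V E → ℝ
  | Sum.inl e => uEdge ε x e
  | Sum.inr (Sum.inl e) => uInter ε ends x e
  | Sum.inr (Sum.inr v) => uVert d H Γ ends rank x v

/-- A symmetric exchange: for every hyperedge `e`, all shares from `i_e` to the edge agent
and the three vertex agents agree (their common value is `f⁻(e)`), and all shares towards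
`i_e` agree (their common value is `f⁺(e)`). -/
def Symm (ends : E → Fin 3 → V) (x : Agent V E → Agent V E → ℝ) : Prop :=
  ∀ e : E, (∀ t : Fin 3, x (interA e) (vertA (ends e t)) = x (interA e) (edgeA e)) ∧
    (∀ t : Fin 3, x (vertA (ends e t)) (interA e) = x (edgeA e) (interA e))

/-- `f⁻(e)`: the common outgoing share of `i_e` in a symmetric exchange. -/
def fminus (x : Agent V E → Agent V E → ℝ) (e : E) : ℝ := x (interA e) (edgeA e)

/-- `f⁺(e)`: the common incoming share of `i_e` in a symmetric exchange. -/
def fplus (x : Agent V E → Agent V E → ℝ) (e : E) : ℝ := x (edgeA e) (interA e)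


/-- The minimum incoming share of `i_e` in `x`. -/
def mIn (ends : E → Fin 3 → V) (x : Agent V E → Agent V E → ℝ) (e : E) : ℝ :=
  min (x (edgeA e) (interA e))
    (min (x (vertA (ends e 0)) (interA e))
      (min (x (vertA (ends e 1)) (interA e)) (x (vertA (ends e 2)) (interA e))))

/-- The maximum outgoing share of `i_e` in `x`. -/
def MOut (ends : E → Fin 3 → V) (x : Agent V E → Agent V E → ℝ) (e : E) : ℝ :=
  max (x (interA e) (edgeA e))
    (max (x (interA e) (vertA (ends e 0)))
      (max (x (interA e) (vertA (ends e 1))) (x (interA e) (vertA (ends e 2)))))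

/-- The symmetrization of an exchange `x`. -/
def symmExch (ends : E → Fin 3 → V) (x : Agent V E → Agent V E → ℝ) :
    Agent V E → Agent V E → ℝ
  | Sum.inr (Sum.inl e), Sum.inl e' => if e = e' then MOut ends x e else 0
  | Sum.inr (Sum.inl e), Sum.inr (Sum.inr v) => if ∃ t, ends e t = v then MOut ends x e else 0
  | Sum.inl e', Sum.inr (Sum.inl e) => if e = e' then mIn ends x e else 0
  | Sum.inr (Sum.inr v), Sum.inr (Sum.inl e) => if ∃ t, ends e t = v then mIn ends x e else 0
  | _, _ => 0

/-- In the instance `D(G,≻,ε)`, for every core-stable data exchange `x`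
there is a symmetric core-stable data exchange `x'` that is weakly better for every agent. -/
theorem exists_symmetric_core_stable
    (V E : Type*) [Fintype V] [Fintype E]
    (ends : E → Fin 3 → V) (hends : ∀ e, Function.Injective (ends e))
    (hdeg : ∀ v, (Ev ends v).card ≤ 3)
    (rank : V → E → Fin 3)
    (hrank_inj : ∀ v, ∀ e ∈ Ev ends v, ∀ e' ∈ Ev ends v, rank v e = rank v e' → e = e')
    (hrank_seg : ∀ v, ∀ e ∈ Ev ends v, (rank v e : ℕ) < (Ev ends v).card)
    (ε d H Γ : ℝ) (hε0 : 0 < ε) (hε1 : ε < 1/1000)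
    (hd : d = ε ^ (-(1:ℝ)/4)) (hH : H = ε ^ (-(1:ℝ)/2)) (hΓ : Γ = 3*(d+H+1)/ε)
    (x : Agent V E → Agent V E → ℝ) (hx : IsExch x)
    (hcs : CoreStable (util ε d H Γ ends rank) x) :
    ∃ x' : Agent V E → Agent V E → ℝ, IsExch x' ∧ Symm ends x' ∧
      CoreStable (util ε d H Γ ends rank) x' ∧
      ∀ a : Agent V E, util ε d H Γ ends rank x a ≤ util ε d H Γ ends rank x' a := by

  classical
  obtain ⟨hxb, hxd⟩ := hx
  have hε' : (0:ℝ) ≤ 1 - ε := by linarith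
  have hd0 : 0 < d := hd ▸ Real.rpow_pos_of_pos hε0 _
  have hH0 : 0 < H := hH ▸ Real.rpow_pos_of_pos hε0 _
  have hΓ0 : 0 ≤ Γ := by
    rw [hΓ]; apply div_nonneg _ hε0.le; nlinarith
  have hw : ∀ v e, 0 ≤ weight d H rank v e := by
    intro v e; unfold weight; split_ifs <;> nlinarith
  set x' := symmExch ends x with hx'def
  -- evaluation lemmas
  have e1 : ∀ e, x' (edgeA e) (interA e) = mIn ends x e := by
    intro e
    show (if e = e then mIn ends x e else 0) = mIn ends x e
    exact if_pos rfl
  have e2 : ∀ e t, x' (vertA (ends e t)) (interA e) = mIn ends x e := by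
    intro e t
    show (if ∃ t', ends e t' = ends e t then mIn ends x e else 0) = mIn ends x e
    exact if_pos ⟨t, rfl⟩
  have e3 : ∀ e, x' (interA e) (edgeA e) = MOut ends x e := by
    intro e
    show (if e = e then MOut ends x e else 0) = MOut ends x e
    exact if_pos rfl
  have e4 : ∀ e t, x' (interA e) (vertA (ends e t)) = MOut ends x e := by
    intro e t
    show (if ∃ t', ends e t' = ends e t then MOut ends x e else 0) = MOut ends x e
    exact if_pos ⟨t, rfl⟩
  -- bounds on mIn and MOut
  have hm0 : ∀ e, 0 ≤ mIn ends x e := fun e =>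
    le_min (hxb _ _).1 (le_min (hxb _ _).1 (le_min (hxb _ _).1 (hxb _ _).1))
  have hm1 : ∀ e, mIn ends x e ≤ 1 := fun e =>
    (min_le_left _ _).trans (hxb _ _).2
  have hM0 : ∀ e, 0 ≤ MOut ends x e := fun e =>
    (hxb _ _).1.trans (le_max_left _ _)
  have hM1 : ∀ e, MOut ends x e ≤ 1 := fun e =>
    max_le (hxb _ _).2 (max_le (hxb _ _).2 (max_le (hxb _ _).2 (hxb _ _).2))
  -- pointwise comparison lemmas
  have hMmem : ∀ e (t : Fin 3), x (interA e) (vertA (ends e t)) ≤ MOut ends x e := by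
    intro e t
    fin_cases t
    · exact le_max_of_le_right (le_max_left _ _)
    · exact le_max_of_le_right (le_max_of_le_right (le_max_left _ _))
    · exact le_max_of_le_right (le_max_of_le_right (le_max_right _ _))
  have hmmem : ∀ e (t : Fin 3), mIn ends x e ≤ x (vertA (ends e t)) (interA e) := by
    intro e t
    fin_cases t
    · exact (min_le_right _ _).trans (min_le_left _ _)
    · exact (min_le_right _ _).trans ((min_le_right _ _).trans (min_le_left _ _))
    · exact (min_le_right _ _).trans ((min_le_right _ _).trans (min_le_right _ _))
  -- x' is an exchange
  have hx' : IsExch x' := by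
    constructor
    · rintro (e | e | v) (e' | e' | v') <;>
        simp only [hx'def, symmExch] <;> constructor <;> (try split_ifs) <;>
          first
            | exact le_rfl
            | exact zero_le_one
            | exact hm0 _
            | exact hm1 _
            | exact hM0 _
            | exact hM1 _
    · rintro (e | e | v) <;> rfl
  -- symmetry
  have hsymm : Symm ends x' := by
    intro e
    exact ⟨fun t => (e4 e t).trans (e3 e).symm, fun t => (e2 e t).trans (e1 e).symm⟩
  -- utility comparisons
  have hedge : ∀ e, uEdge ε x e ≤ uEdge ε x' e := by
    intro e
    rw [uEdge, uEdge, e1, e3]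
    have h1 : x (interA e) (edgeA e) ≤ MOut ends x e := le_max_left _ _
    have h2 : mIn ends x e ≤ x (edgeA e) (interA e) := min_le_left _ _
    nlinarith [mul_le_mul_of_nonneg_left h2 hε']
  have hin : ∀ e, uInter ε ends x e = uInter ε ends x' e := by
    intro e
    rw [uInter, uInter, e1, e2 e 0, e2 e 1, e2 e 2, e3, e4 e 0, e4 e 1, e4 e 2,
      min_self, min_self, min_self, max_self, max_self, max_self]
    rfl
  have hvert : ∀ v, uVert d H Γ ends rank x v ≤ uVert d H Γ ends rank x' v := by
    intro v
    have hP : (∑ e ∈ Ev ends v, weight d H rank v e * x (interA e) (vertA v))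
        ≤ ∑ e ∈ Ev ends v, weight d H rank v e * x' (interA e) (vertA v) := by
      refine Finset.sum_le_sum fun e he => ?_
      obtain ⟨t, ht⟩ := (Finset.mem_filter.mp he).2
      refine mul_le_mul_of_nonneg_left ?_ (hw v e)
      calc x (interA e) (vertA v) = x (interA e) (vertA (ends e t)) := by rw [ht]
        _ ≤ MOut ends x e := hMmem e t
        _ = x' (interA e) (vertA (ends e t)) := (e4 e t).symm
        _ = x' (interA e) (vertA v) := by rw [ht]
    have hC : (∑ e ∈ Ev ends v, x' (vertA v) (interA e))
        ≤ ∑ e ∈ Ev ends v, x (vertA v) (interA e) := by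
      refine Finset.sum_le_sum fun e he => ?_
      obtain ⟨t, ht⟩ := (Finset.mem_filter.mp he).2
      calc x' (vertA v) (interA e) = x' (vertA (ends e t)) (interA e) := by rw [ht]
        _ = mIn ends x e := e2 e t
        _ ≤ x (vertA (ends e t)) (interA e) := hmmem e t
        _ = x (vertA v) (interA e) := by rw [ht]
    have hC2 : max ((∑ e ∈ Ev ends v, x' (vertA v) (interA e)) - 1) 0
        ≤ max ((∑ e ∈ Ev ends v, x (vertA v) (interA e)) - 1) 0 :=
      max_le_max (by linarith) le_rfl
    have := mul_le_mul_of_nonneg_left hC2 hΓ0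
    rw [uVert, uVert]
    linarith
  have hmono : ∀ a, util ε d H Γ ends rank x a ≤ util ε d H Γ ends rank x' a := by
    rintro (e | e | v)
    · exact hedge e
    · exact (hin e).le
    · exact hvert v
  refine ⟨x', hx', hsymm, ?_, hmono⟩
  rintro ⟨U, y, hU, hy, hlt⟩
  exact hcs ⟨U, y, hU, hy, fun a ha => lt_of_le_of_lt (hmono a) (hlt a ha)⟩


end
end DataExchangeHGM
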